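/- Let K ≥ 1 and N ≥ 1 be integers and suppose μ = l/K for some integer 0 ≤ l ≤ K. Then the placement vector a* with a*_l = 1/C(K,l) and all other entries zero (equal file partitioning over all user subsets of size l) is feasible and minimizes the expected delivery rate R̄ over all feasible cache placement vectors. In particular, the cache placement scheme of the MCCS at cache sizes M ∈ {0, N/K, 2N/K, …, N} is a special case of the optimal solution. -/

import Mathlib

open Finset

/-- Number of distinct requests `Ñ(d)` of a demand vector `d`. -/
def distinctReq {K N : ℕ} (d : Fin K → Fin N) : ℕ :=
  (Finset.univ.image d).card

/-- Expected delivery rate `R̄(a)` of the MCCS under placement vector `a`. -/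
noncomputable def expectedRate (K N : ℕ) (a : Fin (K + 1) → ℝ) : ℝ :=
  ((N : ℝ) ^ K)⁻¹ *
    ∑ d : Fin K → Fin N, ∑ l : Fin K,
      ((K.choose ((l : ℕ) + 1) : ℝ) - ((K - distinctReq d).choose ((l : ℕ) + 1) : ℝ)) *
        a l.castSucc

/-- Feasibility of a cache placement vector `a` for normalized cache size `μ`:
file-partition constraint, cache-size constraint, and `0 ≤ a_l ≤ 1`. -/
def Feasible (K : ℕ) (μ : ℝ) (a : Fin (K + 1) → ℝ) : Prop :=
  (∑ l : Fin (K + 1), (K.choose (l : ℕ) : ℝ) * a l) = 1 ∧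
  (∑ l : Fin K, ((K - 1).choose (l : ℕ) : ℝ) * a l.succ) ≤ μ ∧
  ∀ l, 0 ≤ a l ∧ a l ≤ 1


/-- Telescoping: `C(K,l+1) = C(K-n,l+1) + Σ_{i<n} C(K-1-i, l)` for `n ≤ K`. -/
lemma telA (K l : ℕ) : ∀ n, n ≤ K →
    K.choose (l+1) = (K-n).choose (l+1) + ∑ i ∈ range n, (K-1-i).choose l := by
  intro n
  induction n with
  | zero => simp
  | succ n ih =>
    intro h
    have hn : n ≤ K := Nat.le_of_succ_le h
    have h1 : K - n = (K - (n+1)) + 1 := by omega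
    have h2 : K - 1 - n = K - (n+1) := by omega
    rw [ih hn, Finset.sum_range_succ, h1, Nat.choose_succ_succ', h2]
    ring

/-- Cross identity: `C(K,i)·C(K−i,l) = C(K,l)·C(K−l,i)`. -/
lemma crossB (K i l : ℕ) : K.choose i * (K-i).choose l = K.choose l * (K-l).choose i := by
  by_cases h : i + l ≤ K
  · have hi : i ≤ i + l := Nat.le_add_right _ _
    have hl : l ≤ i + l := Nat.le_add_left _ _
    have e1 := Nat.choose_mul (n := K) (k := i + l) (s := i) hi
    have e2 := Nat.choose_mul (n := K) (k := i + l) (s := l) hl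
    have hsymm : (i+l).choose i = (i+l).choose l := by
      rw [← Nat.choose_symm hi, Nat.add_sub_cancel_left]
    rw [hsymm] at e1
    have : (i+l) - i = l := by omega
    rw [this] at e1
    have : (i+l) - l = i := by omega
    rw [this] at e2
    omega
  · push_neg at h
    by_cases hi : i ≤ K
    · by_cases hl : l ≤ K
      · rw [Nat.choose_eq_zero_of_lt (by omega : K - i < l),
            Nat.choose_eq_zero_of_lt (by omega : K - l < i)]
        simp
      · rw [Nat.choose_eq_zero_of_lt (by omega : K < l),
            Nat.choose_eq_zero_of_lt (by omega : K - i < l)]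
        simp
    · rw [Nat.choose_eq_zero_of_lt (by omega : K < i),
          Nat.choose_eq_zero_of_lt (by omega : K - l < i)]
      simp

/-- Upper secant: `C(a,j) ≤ C(b,j) + (a-b)·C(a-1,j-1)` for `b ≤ a`. -/
lemma lemD (j : ℕ) : ∀ a b : ℕ, b ≤ a →
    a.choose j ≤ b.choose j + (a-b) * (a-1).choose (j-1) := by
  cases j with
  | zero => intro a b h; simp
  | succ j =>
    intro a
    induction a with
    | zero => intro b h; interval_cases b; simp
    | succ a ih =>
      intro b h
      rcases Nat.eq_or_lt_of_le h with rfl | h'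
      · simp
      · have hb : b ≤ a := by omega
        have := ih b hb
        have hmono : (a-1).choose j ≤ a.choose j :=
          Nat.choose_le_choose _ (by omega)
        have hstep : (a+1).choose (j+1) = a.choose (j+1) + a.choose j := by
          rw [Nat.choose_succ_succ']; ring
        have hsub : a + 1 - b = (a - b) + 1 := by omega
        simp only [Nat.add_sub_cancel] at this ⊢
        rw [hstep, hsub]
        nlinarith [hmono, this]
  
/-- Lower secant: `C(a,j) + (c-a)·C(a-1,j-1) ≤ C(c,j)` for `a ≤ c`, `1 ≤ j`. -/
lemma lemE (j a : ℕ) : ∀ c : ℕ, a ≤ c →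
    a.choose (j+1) + (c-a) * (a-1).choose j ≤ c.choose (j+1) := by
  intro c
  induction c with
  | zero => intro h; interval_cases a; simp
  | succ c ih =>
    intro h
    rcases Nat.eq_or_lt_of_le h with rfl | h'
    · simp
    · have hc : a ≤ c := by omega
      have := ih hc
      have hmono : (a-1).choose j ≤ c.choose j :=
        Nat.choose_le_choose _ (by omega)
      have hstep : (c+1).choose (j+1) = c.choose (j+1) + c.choose j := by
        rw [Nat.choose_succ_succ']; ring
      have hsub : c + 1 - a = (c - a) + 1 := by omega
      rw [hstep, hsub]
      nlinarith [hmono, this]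


/-- `lemD` specialized to successor index. -/
lemma lemD' (j : ℕ) : ∀ a b : ℕ, b ≤ a →
    a.choose (j+1) ≤ b.choose (j+1) + (a-b) * (a-1).choose j := by
  intro a b h
  have := lemD (j+1) a b h
  simpa using this

/-- Supporting line at `l0` for `l ↦ C(K−l, j+1)`. -/
lemma lemF (K l l0 j : ℕ) (hl : l ≤ K) (hl0 : l0 ≤ K) :
    ((K-l0).choose (j+1) : ℝ) - ((l:ℝ) - (l0:ℝ)) * ((K-l0-1).choose j : ℝ)
      ≤ ((K-l).choose (j+1) : ℝ) := by
  rcases le_or_gt l0 l with h | h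
  · have hD := lemD' j (K-l0) (K-l) (by omega)
    have hab : (K-l0) - (K-l) = l - l0 := by omega
    rw [hab] at hD
    have hcast : ((l:ℝ) - (l0:ℝ)) = ((l - l0 : ℕ) : ℝ) := by
      push_cast [Nat.cast_sub h]; ring
    rw [hcast]
    have := (Nat.cast_le (α := ℝ)).2 hD
    push_cast at this ⊢
    linarith
  · have hE := lemE j (K-l0) (K-l) (by omega)
    have hab : (K-l) - (K-l0) = l0 - l := by omega
    rw [hab] at hE
    have hcast : ((l0:ℝ) - (l:ℝ)) = ((l0 - l : ℕ) : ℝ) := by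
      push_cast [Nat.cast_sub h.le]; ring
    have := (Nat.cast_le (α := ℝ)).2 hE
    push_cast at this ⊢
    nlinarith [this, hcast]

/-- Summed inequality from feasibility (normalized form). -/
lemma lemG (K l0 j : ℕ) (hl0 : l0 ≤ K) (a : Fin (K+1) → ℝ)
    (hpos : ∀ l, 0 ≤ a l)
    (h1 : (∑ l : Fin (K+1), (K.choose (l:ℕ) : ℝ) * a l) = 1)
    (h2 : (∑ l : Fin (K+1), (l:ℝ) * ((K.choose (l:ℕ) : ℝ) * a l)) ≤ (l0:ℝ)) :
    ((K-l0).choose (j+1) : ℝ) ≤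
      ∑ l : Fin (K+1), ((K-(l:ℕ)).choose (j+1) : ℝ) * ((K.choose (l:ℕ) : ℝ) * a l) := by
  set x : Fin (K+1) → ℝ := fun l => (K.choose (l:ℕ) : ℝ) * a l with hx
  have hxnn : ∀ l, 0 ≤ x l := fun l =>
    mul_nonneg (Nat.cast_nonneg _) (hpos l)
  set A : ℝ := ((K-l0).choose (j+1) : ℝ)
  set B : ℝ := ((K-l0-1).choose j : ℝ)
  have hB : 0 ≤ B := Nat.cast_nonneg _
  have step : (∑ l : Fin (K+1), (A - ((l:ℝ) - (l0:ℝ)) * B) * x l) ≤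
      ∑ l : Fin (K+1), ((K-(l:ℕ)).choose (j+1) : ℝ) * x l := by
    apply Finset.sum_le_sum
    intro l _
    exact mul_le_mul_of_nonneg_right
      (lemF K (l:ℕ) l0 j (by omega) hl0) (hxnn l)
  have expand : (∑ l : Fin (K+1), (A - ((l:ℝ) - (l0:ℝ)) * B) * x l)
      = A * (∑ l : Fin (K+1), x l) - B * (∑ l : Fin (K+1), (l:ℝ) * x l)
        + B * (l0:ℝ) * (∑ l : Fin (K+1), x l) := by
    rw [Finset.mul_sum, Finset.mul_sum, Finset.mul_sum, ← Finset.sum_sub_distrib,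
        ← Finset.sum_add_distrib]
    apply Finset.sum_congr rfl
    intro l _
    ring
  rw [expand, h1] at step
  have h2' : (∑ l : Fin (K+1), (l:ℝ) * x l) ≤ (l0:ℝ) := h2
  nlinarith [step, h2']

/-- Mean constraint from the cache-size constraint. -/
lemma lemMean (K l0 : ℕ) (hK : 1 ≤ K) (a : Fin (K+1) → ℝ)
    (h2 : (∑ l : Fin K, ((K-1).choose (l:ℕ) : ℝ) * a l.succ) ≤ (l0:ℝ)/(K:ℝ)) :
    (∑ l : Fin (K+1), (l:ℝ) * ((K.choose (l:ℕ) : ℝ) * a l)) ≤ (l0:ℝ) := by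
  have hKpos : (0:ℝ) < K := by exact_mod_cast hK
  have key : ∀ i : ℕ, (K:ℝ) * ((K-1).choose i : ℝ) = ((i:ℝ)+1) * (K.choose (i+1) : ℝ) := by
    intro i
    have hK1 : K - 1 + 1 = K := by omega
    have h' : K * (K-1).choose i = K.choose (i+1) * (i+1) := by
      have := Nat.add_one_mul_choose_eq (K-1) i
      simpa [Nat.succ_eq_add_one, hK1] using this
    have := congrArg (Nat.cast (R := ℝ)) h'
    push_cast at this
    linarith
  have lhs_eq : (∑ l : Fin (K+1), (l:ℝ) * ((K.choose (l:ℕ) : ℝ) * a l))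
      = (K:ℝ) * (∑ l : Fin K, ((K-1).choose (l:ℕ) : ℝ) * a l.succ) := by
    rw [Fin.sum_univ_succ, Finset.mul_sum]
    simp only [Fin.val_zero, Nat.cast_zero, zero_mul, zero_add, Fin.val_succ]
    apply Finset.sum_congr rfl
    intro l _
    push_cast
    linear_combination (-(a l.succ)) * key (l:ℕ)
  rw [lhs_eq]
  calc (K:ℝ) * (∑ l : Fin K, ((K-1).choose (l:ℕ) : ℝ) * a l.succ)
      ≤ (K:ℝ) * ((l0:ℝ)/(K:ℝ)) := by
        exact mul_le_mul_of_nonneg_left h2 hKpos.le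
    _ = (l0:ℝ) := by field_simp


/-- Real-cast telescoping of the coefficient. -/
lemma coeffEq (K n : ℕ) (hn : n ≤ K) (m : ℕ) :
    (K.choose (m+1) : ℝ) - ((K-n).choose (m+1) : ℝ)
      = ∑ i ∈ range n, ((K-1-i).choose m : ℝ) := by
  have := telA K m n hn
  have := congrArg (Nat.cast (R := ℝ)) this
  push_cast at this
  linarith

/-- Per-demand lower bound for any feasible (normalized) `a`. -/
lemma perDemand (K l0 : ℕ) (hK : 1 ≤ K) (hl0 : l0 ≤ K) (n : ℕ) (hn : n ≤ K)
    (a : Fin (K+1) → ℝ)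
    (hpos : ∀ l, 0 ≤ a l)
    (h1 : (∑ l : Fin (K+1), (K.choose (l:ℕ) : ℝ) * a l) = 1)
    (h2 : (∑ l : Fin (K+1), (l:ℝ) * ((K.choose (l:ℕ) : ℝ) * a l)) ≤ (l0:ℝ)) :
    (∑ i ∈ range n, ((K-1-i).choose l0 : ℝ)) / (K.choose l0 : ℝ) ≤
      ∑ l : Fin K, ((K.choose ((l:ℕ)+1) : ℝ) - ((K-n).choose ((l:ℕ)+1) : ℝ)) * a l.castSucc := by
  have hCl0 : (0:ℝ) < (K.choose l0 : ℝ) := by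
    exact_mod_cast Nat.choose_pos hl0
  -- rewrite RHS
  have rhs_eq : (∑ l : Fin K, ((K.choose ((l:ℕ)+1) : ℝ) - ((K-n).choose ((l:ℕ)+1) : ℝ)) * a l.castSucc)
      = ∑ i ∈ range n, ∑ l : Fin K, ((K-1-i).choose (l:ℕ) : ℝ) * a l.castSucc := by
    rw [Finset.sum_comm]
    apply Finset.sum_congr rfl
    intro l _
    rw [coeffEq K n hn (l:ℕ), Finset.sum_mul]
  rw [rhs_eq, Finset.sum_div]
  apply Finset.sum_le_sum
  intro i hi
  have hi' : i < n := Finset.mem_range.1 hi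
  have hiK : i + 1 ≤ K := by omega
  have hsub : K - 1 - i = K - (i+1) := by omega
  have hCi : (0:ℝ) < (K.choose (i+1) : ℝ) := by
    exact_mod_cast Nat.choose_pos hiK
  -- extend sum over Fin K to Fin (K+1)
  have ext_eq : (∑ l : Fin K, ((K-1-i).choose (l:ℕ) : ℝ) * a l.castSucc)
      = ∑ l : Fin (K+1), ((K-1-i).choose (l:ℕ) : ℝ) * a l := by
    rw [Fin.sum_univ_castSucc]
    have : ((K-1-i).choose K : ℝ) = 0 := by
      rw [Nat.choose_eq_zero_of_lt (by omega)]; simp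
    simp [Fin.coe_castSucc, Fin.val_last, this]
  rw [ext_eq]
  -- rewrite via cross identity
  have term_eq : ∀ l : Fin (K+1),
      ((K-1-i).choose (l:ℕ) : ℝ) * a l
        = (K.choose (i+1) : ℝ)⁻¹ *
            (((K-(l:ℕ)).choose (i+1) : ℝ) * ((K.choose (l:ℕ) : ℝ) * a l)) := by
    intro l
    have := crossB K (i+1) (l:ℕ)
    have hc := congrArg (Nat.cast (R := ℝ)) this
    push_cast at hc
    rw [hsub]
    field_simp
    linear_combination (a l) * hc
  have sum_eq : (∑ l : Fin (K+1), ((K-1-i).choose (l:ℕ) : ℝ) * a l)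
      = (K.choose (i+1) : ℝ)⁻¹ *
          ∑ l : Fin (K+1), ((K-(l:ℕ)).choose (i+1) : ℝ) * ((K.choose (l:ℕ) : ℝ) * a l) := by
    rw [Finset.mul_sum]
    exact Finset.sum_congr rfl fun l _ => term_eq l
  rw [sum_eq]
  have hG := lemG K l0 i hl0 a hpos h1 h2
  have target_eq : ((K-1-i).choose l0 : ℝ) / (K.choose l0 : ℝ)
      = (K.choose (i+1) : ℝ)⁻¹ * ((K-l0).choose (i+1) : ℝ) := by
    have := crossB K (i+1) l0
    have hc := congrArg (Nat.cast (R := ℝ)) this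
    push_cast at hc
    rw [hsub]
    field_simp
    nlinarith [hc]
  rw [target_eq]
  exact mul_le_mul_of_nonneg_left hG (by positivity)

/-- Value of the objective (per demand) at `astar`. -/
lemma astarValue (K l0 : ℕ) (hK : 1 ≤ K) (hl0 : l0 ≤ K) (n : ℕ) (hn : n ≤ K)
    (astar : Fin (K + 1) → ℝ)
    (hastar : ∀ l : Fin (K + 1),
      astar l = if (l : ℕ) = l0 then 1 / (K.choose l0 : ℝ) else 0) :
    (∑ l : Fin K, ((K.choose ((l:ℕ)+1) : ℝ) - ((K-n).choose ((l:ℕ)+1) : ℝ)) * astar l.castSucc)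
      = (∑ i ∈ range n, ((K-1-i).choose l0 : ℝ)) / (K.choose l0 : ℝ) := by
  rcases Nat.lt_or_ge l0 K with h | h
  · -- l0 < K
    rw [Finset.sum_eq_single (⟨l0, h⟩ : Fin K)]
    · have hv : astar (Fin.castSucc ⟨l0, h⟩) = 1 / (K.choose l0 : ℝ) := by
        rw [hastar]; simp
      rw [hv, coeffEq K n hn l0]
      rw [Finset.sum_div]
      rw [Finset.sum_mul]
      apply Finset.sum_congr rfl
      intro i _
      ring
    · intro l _ hne
      have hne' : (l : ℕ) ≠ l0 := fun hc => hne (Fin.ext hc)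
      rw [hastar, Fin.coe_castSucc, if_neg hne', mul_zero]
    · intro habs
      exact absurd (Finset.mem_univ _) habs
  · -- l0 = K
    have hl0K : l0 = K := le_antisymm hl0 h
    have lhs0 : (∑ l : Fin K, ((K.choose ((l:ℕ)+1) : ℝ) - ((K-n).choose ((l:ℕ)+1) : ℝ)) * astar l.castSucc) = 0 := by
      apply Finset.sum_eq_zero
      intro l _
      have hne' : (l : ℕ) ≠ l0 := by omega
      rw [hastar, Fin.coe_castSucc, if_neg hne', mul_zero]
    have rhs0 : (∑ i ∈ range n, ((K-1-i).choose l0 : ℝ)) = 0 := by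
      apply Finset.sum_eq_zero
      intro i hi
      have : K - 1 - i < l0 := by omega
      rw [Nat.choose_eq_zero_of_lt this]
      simp
    rw [lhs0, rhs0]
    simp


/-- **Case 1 (equal file partitioning).** If `μ = l/K` for an integer `0 ≤ l ≤ K`,
then the placement with `a_l = 1/C(K,l)` and all other entries zero is feasible and
minimizes the expected delivery rate; this recovers the MCCS placement at cache
sizes `M ∈ {0, N/K, 2N/K, …, N}`. -/
theorem equal_partition_optimal_at_grid_points
    (K N : ℕ) (hK : 1 ≤ K) (hN : 1 ≤ N)
    (l0 : ℕ) (hl0 : l0 ≤ K)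
    (μ : ℝ) (hμ : μ = (l0 : ℝ) / K)
    (astar : Fin (K + 1) → ℝ)
    (hastar : ∀ l : Fin (K + 1),
      astar l = if (l : ℕ) = l0 then 1 / (K.choose l0 : ℝ) else 0) :
    Feasible K μ astar ∧
      ∀ a : Fin (K + 1) → ℝ, Feasible K μ a →
        expectedRate K N astar ≤ expectedRate K N a := by
  have hCl0 : 0 < K.choose l0 := Nat.choose_pos hl0
  have hCl0R : (0:ℝ) < (K.choose l0 : ℝ) := by exact_mod_cast hCl0
  have hKR : (0:ℝ) < (K:ℝ) := by exact_mod_cast hK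
  constructor
  · refine ⟨?_, ?_, ?_⟩
    · -- partition constraint
      rw [Finset.sum_eq_single (⟨l0, by omega⟩ : Fin (K+1))]
      · rw [hastar]
        simp only [if_pos rfl, ↓reduceIte]
        field_simp
      · intro l _ hne
        have hne' : (l : ℕ) ≠ l0 := fun hc => hne (Fin.ext hc)
        rw [hastar, if_neg hne', mul_zero]
      · intro habs; exact absurd (Finset.mem_univ _) habs
    · -- cache constraint
      rw [hμ]
      rcases Nat.eq_zero_or_pos l0 with h0 | hpos0
      · subst h0
        have : (∑ l : Fin K, ((K-1).choose (l:ℕ) : ℝ) * astar l.succ) = 0 := by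
          apply Finset.sum_eq_zero
          intro l _
          have hne' : ((l.succ : Fin (K+1)) : ℕ) ≠ 0 := by
            rw [Fin.val_succ]; omega
          rw [hastar, if_neg hne', mul_zero]
        rw [this]
        simp
      · obtain ⟨m, rfl⟩ : ∃ m, l0 = m + 1 := ⟨l0 - 1, by omega⟩
        have hmK : m < K := by omega
        have key : (K:ℝ) * ((K-1).choose m : ℝ) = ((m:ℝ)+1) * (K.choose (m+1) : ℝ) := by
          have hK1 : K - 1 + 1 = K := by omega
          have h' : K * (K-1).choose m = K.choose (m+1) * (m+1) := by
            have := Nat.add_one_mul_choose_eq (K-1) m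
            simpa [Nat.succ_eq_add_one, hK1] using this
          have := congrArg (Nat.cast (R := ℝ)) h'
          push_cast at this
          linarith
        rw [Finset.sum_eq_single (⟨m, hmK⟩ : Fin K)]
        · have hval : ((⟨m, hmK⟩ : Fin K).succ : ℕ) = m + 1 := rfl
          rw [hastar, hval, if_pos rfl]
          have heq : (((K-1).choose ((⟨m, hmK⟩ : Fin K) : ℕ)) : ℝ) * (1 / (K.choose (m+1) : ℝ))
              = ((m+1 : ℕ) : ℝ) / (K : ℝ) := by
            have hvm : ((⟨m, hmK⟩ : Fin K) : ℕ) = m := rfl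
            rw [hvm]
            field_simp
            push_cast
            linarith [key]
          rw [heq]
        · intro l _ hne
          have hne' : ((l.succ : Fin (K+1)) : ℕ) ≠ m + 1 := by
            rw [Fin.val_succ]
            intro hc
            exact hne (Fin.ext (show (l:ℕ) = m by omega))
          rw [hastar, if_neg hne', mul_zero]
        · intro habs; exact absurd (Finset.mem_univ _) habs
    · -- bounds
      intro l
      rw [hastar]
      split
      · constructor
        · positivity
        · rw [div_le_one hCl0R]
          exact_mod_cast hCl0
      · exact ⟨le_refl 0, zero_le_one⟩
  · -- optimality
    intro a ⟨h1, h2, h3⟩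
    unfold expectedRate
    apply mul_le_mul_of_nonneg_left _ (by positivity)
    apply Finset.sum_le_sum
    intro d _
    have hn : distinctReq d ≤ K := by
      unfold distinctReq
      calc (Finset.univ.image d).card ≤ (Finset.univ : Finset (Fin K)).card :=
            Finset.card_image_le
        _ = K := by simp
    have h2' : (∑ l : Fin (K+1), (l:ℝ) * ((K.choose (l:ℕ) : ℝ) * a l)) ≤ (l0:ℝ) := by
      apply lemMean K l0 hK a
      rw [← hμ]; exact h2
    rw [astarValue K l0 hK hl0 (distinctReq d) hn astar hastar]
    exact perDemand K l0 hK hl0 (distinctReq d) hn a (fun l => (h3 l).1) h1 h2'
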